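/- With the setup K = E ⊕ J = V ⊕ H, Ẽ = Γ₁(V), J̃ = Γ₂(V), U = Π₂Γ₁(V), and assuming V ∩ E = 0, V ∩ J = 0, H ∩ Ẽ = 0, and H ∩ J̃ = 0, one has the direct sum decompositions E = Ẽ ⊕ (E ∩ H) and J = J̃ ⊕ (J ∩ H), and consequently H = U ⊕ (E ∩ H) ⊕ (J ∩ H). -/

import Mathlib

open Submodule Module

theorem stmt2 (K : Type*) [AddCommGroup K] [Module ℂ K] [FiniteDimensional ℂ K]
    (E J V H : Submodule ℂ K) (hEJ : IsCompl E J) (hVH : IsCompl V H)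
    (Γ₁ : K →ₗ[ℂ] K) (Γ₂ : K →ₗ[ℂ] K) (Pi2 : K →ₗ[ℂ] K)
    (hΓ₁ : Γ₁ = E.subtype ∘ₗ (E.linearProjOfIsCompl J hEJ))
    (hΓ₂ : Γ₂ = J.subtype ∘ₗ (J.linearProjOfIsCompl E hEJ.symm))
    (hPi2 : Pi2 = H.subtype ∘ₗ (H.linearProjOfIsCompl V hVH.symm))
    (Etil Jtil U : Submodule ℂ K)
    (hEtil : Etil = V.map Γ₁) (hJtil : Jtil = V.map Γ₂)
    (hU : U = (V.map Γ₁).map Pi2)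
    (hVE : V ⊓ E = ⊥) (hVJ : V ⊓ J = ⊥)
    (hHE : H ⊓ Etil = ⊥) (hHJ : H ⊓ Jtil = ⊥) :
    (Disjoint Etil (E ⊓ H) ∧ Etil ⊔ (E ⊓ H) = E) ∧
    (Disjoint Jtil (J ⊓ H) ∧ Jtil ⊔ (J ⊓ H) = J) ∧
    (Disjoint U ((E ⊓ H) ⊔ (J ⊓ H)) ∧ Disjoint (E ⊓ H) (J ⊓ H) ∧
      U ⊔ (E ⊓ H) ⊔ (J ⊓ H) = H) := by
  -- pointwise facts
  have hmE : ∀ x : K, Γ₁ x ∈ E := fun x => by rw [hΓ₁]; exact (E.linearProjOfIsCompl J hEJ x).2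
  have hmJ : ∀ x : K, Γ₂ x ∈ J := fun x => by
    rw [hΓ₂]; exact (J.linearProjOfIsCompl E hEJ.symm x).2
  have hsum : ∀ x : K, Γ₁ x + Γ₂ x = x := fun x => by
    rw [hΓ₁, hΓ₂]
    exact Submodule.projection_add_projection_eq_self hEJ x
  have hΓ₁E : ∀ x ∈ E, Γ₁ x = x := fun x hx => by
    rw [hΓ₁]
    exact congrArg (Subtype.val) (Submodule.projectionOnto_apply_left hEJ ⟨x, hx⟩)
  have hΓ₁J : ∀ x ∈ J, Γ₁ x = 0 := fun x hx => by
    rw [hΓ₁]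
    exact congrArg (Subtype.val) (Submodule.projectionOnto_apply_of_mem_right hEJ hx)
  have hΓ₂J : ∀ x ∈ J, Γ₂ x = x := fun x hx => by
    rw [hΓ₂]
    exact congrArg (Subtype.val)
      (Submodule.projectionOnto_apply_left hEJ.symm ⟨x, hx⟩)
  have hΓ₂E : ∀ x ∈ E, Γ₂ x = 0 := fun x hx => by
    rw [hΓ₂]
    exact congrArg (Subtype.val) (Submodule.projectionOnto_apply_of_mem_right hEJ.symm hx)
  have hPiH : ∀ x ∈ H, Pi2 x = x := fun x hx => by
    rw [hPi2]
    exact congrArg (Subtype.val)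
      (Submodule.projectionOnto_apply_left hVH.symm ⟨x, hx⟩)
  have hPiV : ∀ x ∈ V, Pi2 x = 0 := fun x hx => by
    rw [hPi2]
    exact congrArg (Subtype.val) (Submodule.projectionOnto_apply_of_mem_right hVH.symm hx)
  have hmH : ∀ x : K, Pi2 x ∈ H := fun x => by
    rw [hPi2]; exact (H.linearProjOfIsCompl V hVH.symm x).2
  have hPidiff : ∀ x : K, x - Pi2 x ∈ V := fun x => by
    have h := Submodule.projection_add_projection_eq_self hVH.symm x
    have : x - Pi2 x = (V.linearProjOfIsCompl H hVH.symm.symm x : K) := by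
      rw [hPi2]; simp only [LinearMap.coe_comp, Function.comp_apply, Submodule.coe_subtype]
      exact sub_eq_of_eq_add' h.symm
    rw [this]
    exact (V.linearProjOfIsCompl H hVH.symm.symm x).2
  -- submodule inclusions
  have hEtilE : Etil ≤ E := by
    rw [hEtil]; rintro x ⟨v, hv, rfl⟩; exact hmE v
  have hJtilJ : Jtil ≤ J := by
    rw [hJtil]; rintro x ⟨v, hv, rfl⟩; exact hmJ v
  -- finrank facts
  have hrkE : finrank ℂ (V.map Γ₁) = finrank ℂ V := by
    have hinj : Function.Injective (Γ₁ ∘ₗ V.subtype) := by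
      rw [← LinearMap.ker_eq_bot, eq_bot_iff]
      rintro ⟨v, hv⟩ hker
      have h0 : Γ₁ v = 0 := hker
      have : v ∈ V ⊓ J := ⟨hv, by rw [← hsum v, h0, zero_add]; exact hmJ v⟩
      rw [hVJ] at this
      simpa using this
    have h := LinearMap.finrank_range_of_inj hinj
    rwa [LinearMap.range_comp, Submodule.range_subtype] at h
  have hrkJ : finrank ℂ (V.map Γ₂) = finrank ℂ V := by
    have hinj : Function.Injective (Γ₂ ∘ₗ V.subtype) := by
      rw [← LinearMap.ker_eq_bot, eq_bot_iff]
      rintro ⟨v, hv⟩ hker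
      have h0 : Γ₂ v = 0 := hker
      have : v ∈ V ⊓ E := ⟨hv, by rw [← hsum v, h0, add_zero]; exact hmE v⟩
      rw [hVE] at this
      simpa using this
    have h := LinearMap.finrank_range_of_inj hinj
    rwa [LinearMap.range_comp, Submodule.range_subtype] at h
  have hVHrk : finrank ℂ V + finrank ℂ H = finrank ℂ K :=
    Submodule.finrank_add_eq_of_isCompl hVH
  -- Etil ⊔ H = ⊤ and Jtil ⊔ H = ⊤
  have htop : ∀ W : Submodule ℂ K, finrank ℂ W = finrank ℂ V → W ⊓ H = ⊥ → W ⊔ H = ⊤ := by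
    intro W hrk hdisj
    apply Submodule.eq_top_of_finrank_eq
    have h := Submodule.finrank_sup_add_finrank_inf_eq W H
    rw [hdisj, finrank_bot, add_zero, hrk, hVHrk] at h
    exact h
  have htopE : Etil ⊔ H = ⊤ := htop Etil (by rw [hEtil, hrkE]) (by rw [inf_comm]; exact hHE)
  have htopJ : Jtil ⊔ H = ⊤ := htop Jtil (by rw [hJtil, hrkJ]) (by rw [inf_comm]; exact hHJ)
  -- first decomposition
  have hsupE : Etil ⊔ (E ⊓ H) = E := by
    apply le_antisymm (sup_le hEtilE inf_le_left)
    intro e he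
    have : e ∈ Etil ⊔ H := by rw [htopE]; trivial
    rcases Submodule.mem_sup.1 this with ⟨x, hx, h, hh, rfl⟩
    exact Submodule.add_mem_sup hx ⟨by
      have := Submodule.sub_mem E he (hEtilE hx); simpa using this, hh⟩
  have hsupJ : Jtil ⊔ (J ⊓ H) = J := by
    apply le_antisymm (sup_le hJtilJ inf_le_left)
    intro j hj
    have : j ∈ Jtil ⊔ H := by rw [htopJ]; trivial
    rcases Submodule.mem_sup.1 this with ⟨x, hx, h, hh, rfl⟩
    exact Submodule.add_mem_sup hx ⟨by
      have := Submodule.sub_mem J hj (hJtilJ hx); simpa using this, hh⟩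
  have hdE : Disjoint Etil (E ⊓ H) := by
    rw [Submodule.disjoint_def]
    intro x hx hx'
    have : x ∈ H ⊓ Etil := ⟨hx'.2, hx⟩
    rw [hHE] at this; simpa using this
  have hdJ : Disjoint Jtil (J ⊓ H) := by
    rw [Submodule.disjoint_def]
    intro x hx hx'
    have : x ∈ H ⊓ Jtil := ⟨hx'.2, hx⟩
    rw [hHJ] at this; simpa using this
  have hdEJ : Disjoint (E ⊓ H) (J ⊓ H) := by
    rw [Submodule.disjoint_def]
    intro x hx hx'
    exact (Submodule.disjoint_def.1 hEJ.disjoint) x hx.1 hx'.1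
  refine ⟨⟨hdE, hsupE⟩, ⟨hdJ, hsupJ⟩, ?_, hdEJ, ?_⟩
  · -- Disjoint U ((E ⊓ H) ⊔ (J ⊓ H))
    rw [Submodule.disjoint_def]
    intro u hu hu'
    rw [hU] at hu
    rcases hu with ⟨x, hx, rfl⟩
    rcases Submodule.mem_sup.1 hu' with ⟨a, ha, b, hb, hab⟩
    have hxE : x ∈ E := hEtilE (hEtil ▸ hx)
    set w : K := x - Pi2 x with hw
    have hwV : w ∈ V := hPidiff x
    -- x = w + a + b
    have hxwab : x = w + a + b := by rw [hw, ← hab]; abel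
    -- apply Γ₂ : 0 = Γ₂ w + b
    have hb0 : Γ₂ w + b = 0 := by
      have := congrArg Γ₂ hxwab
      rw [hΓ₂E x hxE] at this
      rw [map_add, map_add, hΓ₂E a ha.1, hΓ₂J b hb.1, add_zero] at this
      exact this.symm
    have hΓ₂wJtil : Γ₂ w ∈ Jtil := by rw [hJtil]; exact ⟨w, hwV, rfl⟩
    have hΓ₂w0 : Γ₂ w = 0 := by
      have : Γ₂ w ∈ H ⊓ Jtil := ⟨by
        have h2 : Γ₂ w = -b := eq_neg_of_add_eq_zero_left hb0
        rw [h2]; exact Submodule.neg_mem H hb.2, hΓ₂wJtil⟩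
      rw [hHJ] at this; simpa using this
    have hb00 : b = 0 := by rwa [hΓ₂w0, zero_add] at hb0
    have hwE : w ∈ E := by
      have h2 : w = Γ₁ w := by conv_lhs => rw [← hsum w, hΓ₂w0, add_zero]
      rw [h2]; exact hmE w
    have hw0 : w = 0 := by
      have : w ∈ V ⊓ E := ⟨hwV, hwE⟩
      rw [hVE] at this; simpa using this
    have hxa : x = a := by rw [hxwab, hw0, hb00]; abel
    have hx0 : x = 0 := by
      have : x ∈ H ⊓ Etil := ⟨hxa ▸ ha.2, hEtil ▸ hx⟩
      rw [hHE] at this; simpa using this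
    rw [hx0, map_zero]
  · -- U ⊔ (E ⊓ H) ⊔ (J ⊓ H) = H
    have hUH : U ≤ H := by
      rw [hU]; rintro u ⟨x, hx, rfl⟩; exact hmH x
    apply le_antisymm (sup_le (sup_le hUH inf_le_right) inf_le_right)
    intro h hh
    have heE : Γ₁ h ∈ Etil ⊔ (E ⊓ H) := by rw [hsupE]; exact hmE h
    have hjJ : Γ₂ h ∈ Jtil ⊔ (J ⊓ H) := by rw [hsupJ]; exact hmJ h
    rcases Submodule.mem_sup.1 heE with ⟨x, hx, a, ha, hxa⟩
    rcases Submodule.mem_sup.1 hjJ with ⟨y, hy, b, hb, hyb⟩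
    rw [hEtil] at hx; rcases hx with ⟨v, hv, rfl⟩
    rw [hJtil] at hy; rcases hy with ⟨w, hw, rfl⟩
    have hdecomp : h = Γ₁ v + a + (Γ₂ w + b) := by rw [hxa, hyb, hsum h]
    have hP : h = Pi2 (Γ₁ v) + a + (Pi2 (Γ₂ w) + b) := by
      have := congrArg Pi2 hdecomp
      rw [hPiH h hh] at this
      rw [map_add, map_add, map_add, hPiH a ha.2, hPiH b hb.2] at this
      exact this
    have hPy : Pi2 (Γ₂ w) = -Pi2 (Γ₁ w) := by
      have h1 : Γ₂ w = w - Γ₁ w := eq_sub_of_add_eq' (hsum w)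
      rw [h1, map_sub, hPiV w hw, zero_sub]
    have hUle : U ≤ U ⊔ (E ⊓ H) ⊔ (J ⊓ H) := le_trans le_sup_left le_sup_left
    have hEle : E ⊓ H ≤ U ⊔ (E ⊓ H) ⊔ (J ⊓ H) := le_trans le_sup_right le_sup_left
    have hJle : J ⊓ H ≤ U ⊔ (E ⊓ H) ⊔ (J ⊓ H) := le_sup_right
    have hu1 : Pi2 (Γ₁ v) ∈ U := by rw [hU]; exact ⟨Γ₁ v, ⟨v, hv, rfl⟩, rfl⟩
    have hu2 : Pi2 (Γ₂ w) ∈ U := by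
      rw [hPy]
      exact Submodule.neg_mem U (by rw [hU]; exact ⟨Γ₁ w, ⟨w, hw, rfl⟩, rfl⟩)
    rw [hP]
    exact Submodule.add_mem _ (Submodule.add_mem _ (hUle hu1) (hEle ha))
      (Submodule.add_mem _ (hUle hu2) (hJle hb))
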